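/- arXiv:1811.06370 — 2 statements merged into one kernel-verified Lean document; each statement's English description precedes it below -/
import Mathlib

section
/- Let g be a function analytic on the half-plane Re(z) > 0 satisfying the growth bound |g(s)| ≤ A·e^{(r+δ)|s|} there, for some constants A, r > 0 and δ > 0. Let H : (0,∞) → ℝ be a locally integrable function satisfying H(t) = t⁻¹·H(t⁻¹) for all t > 0, and suppose that for every complex s the Mellin transform ∫₀^∞ t^{s-1} H(t) dt converges and equals g(s). Fix x with 0 < x < π/r, fix z > 0, and define f(z,y) := (1/x) ∫₀^∞ (z t/(z t + 1)) · t^{-y/x + 1/x - 1} · H(t^{1/x}) dt. Then for every y with the integrals defining f(z,y) and f(z,y+x) convergent, f satisfies the functional equation f(z, y+x) + z·f(z, y) = z·g(y). -/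
open MeasureTheory Set

/-- A solution of the functional equation `f(z,y+x) + z·f(z,y) = z·g(y)`
given by `f(z,y) = (1/x) ∫₀^∞ (zt/(zt+1)) t^{-y/x+1/x-1} H(t^{1/x}) dt`, where `H` is a
locally integrable modular function whose Mellin transform is `g`. -/
theorem solution_of_functional_equation
    (g : ℂ → ℂ) (A r δ : ℝ) (hA : 0 < A) (hr : 0 < r) (hδ : 0 < δ)
    (hg_anal : AnalyticOn ℂ g {w : ℂ | 0 < w.re})
    (hg_bound : ∀ s : ℂ, 0 < s.re →
      ‖g s‖ ≤ A * Real.exp ((r + δ) * ‖s‖))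
    (H : ℝ → ℝ)
    (hH_loc : LocallyIntegrableOn H (Ioi 0))
    (hH_mod : ∀ t : ℝ, 0 < t → H t = t⁻¹ * H t⁻¹)
    (hH_mellin_int : ∀ s : ℂ,
      IntegrableOn (fun t : ℝ => (t : ℂ) ^ (s - 1) * (H t : ℂ)) (Ioi 0))
    (hH_mellin : ∀ s : ℂ,
      (∫ t in Ioi (0 : ℝ), (t : ℂ) ^ (s - 1) * (H t : ℂ)) = g s)
    (x : ℝ) (hx : 0 < x) (hxr : x < Real.pi / r)
    (z : ℝ) (hz : 0 < z)
    (f : ℂ → ℂ)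
    (hf : ∀ y : ℂ, f y = (1 / (x : ℂ)) * ∫ t in Ioi (0 : ℝ),
      ((z * t / (z * t + 1) : ℝ) : ℂ) * (t : ℂ) ^ (-y / (x : ℂ) + 1 / (x : ℂ) - 1) *
        (H (t ^ ((1 : ℝ) / x)) : ℂ))
    (y : ℂ)
    (hint_y : IntegrableOn (fun t : ℝ =>
      ((z * t / (z * t + 1) : ℝ) : ℂ) * (t : ℂ) ^ (-y / (x : ℂ) + 1 / (x : ℂ) - 1) *
        (H (t ^ ((1 : ℝ) / x)) : ℂ)) (Ioi 0))
    (hint_yx : IntegrableOn (fun t : ℝ =>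
      ((z * t / (z * t + 1) : ℝ) : ℂ) * (t : ℂ) ^ (-(y + (x : ℂ)) / (x : ℂ) + 1 / (x : ℂ) - 1) *
        (H (t ^ ((1 : ℝ) / x)) : ℂ)) (Ioi 0)) :
    f (y + (x : ℂ)) + (z : ℂ) * f y = (z : ℂ) * g y := by
  have hx0 : (x : ℂ) ≠ 0 := Complex.ofReal_ne_zero.mpr hx.ne'
  set a : ℂ := -y / (x : ℂ) + 1 / (x : ℂ) - 1 with ha
  -- Step K : ∫ u^{-y} H(u) = g y  (modularity + inversion)
  have hK : (∫ u in Ioi (0 : ℝ), (u : ℂ) ^ (-y) * (H u : ℂ)) = g y := by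
    have h := MeasureTheory.integral_comp_rpow_Ioi
      (fun v : ℝ => (v : ℂ) ^ (y - 1) * (H v : ℂ)) (neg_ne_zero.mpr one_ne_zero)
    rw [← hH_mellin y, ← h]
    refine setIntegral_congr_fun measurableSet_Ioi fun u hu => ?_
    have hu0 : (0 : ℝ) < u := hu
    have huc : (u : ℂ) ≠ 0 := Complex.ofReal_ne_zero.mpr hu0.ne'
    have harg : (u : ℂ).arg ≠ Real.pi := by
      rw [Complex.arg_ofReal_of_nonneg hu0.le]; exact Real.pi_ne_zero.symm
    rw [Real.rpow_neg_one]
    have h2 : u ^ (-1 - 1 : ℝ) = u⁻¹ * u⁻¹ := by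
      rw [show (-1 - 1 : ℝ) = -1 + -1 by ring, Real.rpow_add hu0,
        Real.rpow_neg_one]
    rw [hH_mod u hu0, h2]
    push_cast
    rw [Complex.inv_cpow _ _ harg, ← Complex.cpow_neg]
    rw [show (u : ℂ) ^ (-y) = (u : ℂ) ^ (-(y - 1)) * (u : ℂ)⁻¹ by
      rw [← Complex.cpow_neg_one, ← Complex.cpow_add _ _ huc]; congr 1; ring]
    simp [Complex.real_smul]
    ring
  -- Step J : ∫ t^a H(t^{1/x}) dt = x * g y  (substitution u = t^{1/x})
  have hJ : (∫ t in Ioi (0 : ℝ), (t : ℂ) ^ a * (H (t ^ ((1 : ℝ) / x)) : ℂ))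
      = (x : ℂ) * g y := by
    have h := MeasureTheory.integral_comp_rpow_Ioi
      (fun u : ℝ => x • ((u : ℂ) ^ (-y) * (H u : ℂ))) (one_div_ne_zero hx.ne')
    have hrhs : (∫ u in Ioi (0 : ℝ), x • ((u : ℂ) ^ (-y) * (H u : ℂ)))
        = (x : ℂ) * g y := by
      rw [integral_smul, hK, Complex.real_smul]
    rw [← hrhs, ← h]
    refine setIntegral_congr_fun measurableSet_Ioi fun t ht => ?_
    have ht0 : (0 : ℝ) < t := ht
    have htc : (t : ℂ) ≠ 0 := Complex.ofReal_ne_zero.mpr ht0.ne'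
    have hmul : ((t ^ ((1 : ℝ) / x) : ℝ) : ℂ) ^ (-y)
        = (t : ℂ) ^ (((1 : ℝ) / x : ℝ) * (-y) : ℂ) := by
      rw [Complex.cpow_mul_ofReal_nonneg ht0.le]
    have hpow : ((t ^ ((1 : ℝ) / x - 1) : ℝ) : ℂ) = (t : ℂ) ^ (((1 : ℝ) / x - 1 : ℝ) : ℂ) :=
      Complex.ofReal_cpow ht0.le _
    have habs : |(1 : ℝ) / x| = 1 / x := abs_of_pos (by positivity)
    have hcomb : (t : ℂ) ^ ((1 : ℂ) / (x : ℂ) - 1) * (t : ℂ) ^ ((1 : ℂ) / (x : ℂ) * -y)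
        = (t : ℂ) ^ a := by
      rw [← Complex.cpow_add _ _ htc]; congr 1; rw [ha]; ring
    simp only [habs, Complex.real_smul, smul_eq_mul]
    push_cast [hmul, hpow]
    rw [← hcomb]
    field_simp
  -- Pointwise identity combining the two integrands
  have key : ∀ t ∈ Ioi (0 : ℝ),
      (((z * t / (z * t + 1) : ℝ) : ℂ) * (t : ℂ) ^ (-(y + (x : ℂ)) / (x : ℂ) + 1 / (x : ℂ) - 1) *
        (H (t ^ ((1 : ℝ) / x)) : ℂ))
      + (z : ℂ) * (((z * t / (z * t + 1) : ℝ) : ℂ) * (t : ℂ) ^ a * (H (t ^ ((1 : ℝ) / x)) : ℂ))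
      = (z : ℂ) * ((t : ℂ) ^ a * (H (t ^ ((1 : ℝ) / x)) : ℂ)) := by
    intro t ht
    have ht0 : (0 : ℝ) < t := ht
    have htc : (t : ℂ) ≠ 0 := Complex.ofReal_ne_zero.mpr ht0.ne'
    have hzt : (z * t + 1 : ℝ) ≠ 0 := by positivity
    have hztc : ((z : ℂ) * (t : ℂ) + 1) ≠ 0 := by
      exact_mod_cast Complex.ofReal_ne_zero.mpr hzt
    have e1 : -(y + (x : ℂ)) / (x : ℂ) + 1 / (x : ℂ) - 1 = a - 1 := by
      rw [ha]; field_simp; ring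
    rw [e1, Complex.cpow_sub _ _ htc, Complex.cpow_one]
    push_cast
    field_simp
    ring
  -- Put everything together
  have hsum : (∫ t in Ioi (0 : ℝ),
      (((z * t / (z * t + 1) : ℝ) : ℂ) * (t : ℂ) ^ (-(y + (x : ℂ)) / (x : ℂ) + 1 / (x : ℂ) - 1) *
        (H (t ^ ((1 : ℝ) / x)) : ℂ)
      + (z : ℂ) * (((z * t / (z * t + 1) : ℝ) : ℂ) * (t : ℂ) ^ a * (H (t ^ ((1 : ℝ) / x)) : ℂ))))
      = (z : ℂ) * ((x : ℂ) * g y) := by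
    rw [setIntegral_congr_fun measurableSet_Ioi key]
    rw [MeasureTheory.integral_const_mul, hJ]
  rw [MeasureTheory.integral_add hint_yx (hint_y.const_mul (z : ℂ))] at hsum
  rw [MeasureTheory.integral_const_mul] at hsum
  rw [hf, hf]
  rw [show (z : ℂ) * g y = (1 / (x : ℂ)) * ((z : ℂ) * ((x : ℂ) * g y)) by field_simp,
    ← hsum]
  ring
end

section
/- The function H̄(t) := 2t² ∑_{n≥1} (2π²n⁴t² − 3πn²) e^{−πn²t²}, defined for t > 0, satisfies the modularity relation H̄(t) = t⁻¹·H̄(t⁻¹) for all t > 0. -/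
open Real

/-- `H̄(t) = 2t² ∑_{n≥1} (2π²n⁴t² − 3πn²) e^{−πn²t²}`. -/
noncomputable def Hbar (t : ℝ) : ℝ :=
  2 * t ^ 2 * ∑' n : ℕ+, (2 * π ^ 2 * (n : ℝ) ^ 4 * t ^ 2 - 3 * π * (n : ℝ) ^ 2) *
    Real.exp (-π * (n : ℝ) ^ 2 * t ^ 2)

open Set

section Aux

lemma sum_nat_aux (k : ℕ) {c : ℝ} (hc : 0 < c) :
    Summable fun n : ℕ => (n : ℝ) ^ k * Real.exp (-π * c * (n : ℝ) ^ 2) := by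
  refine Summable.of_nonneg_of_le (fun n => by positivity) (fun n => ?_)
    (summable_pow_mul_exp_neg_nat_mul k (mul_pos pi_pos hc))
  apply mul_le_mul_of_nonneg_left _ (by positivity)
  apply Real.exp_le_exp.2
  have h1 : (n : ℝ) ≤ (n : ℝ) ^ 2 := by
    rcases Nat.eq_zero_or_pos n with h | h
    · simp [h]
    · have : (1:ℝ) ≤ (n:ℝ) := by exact_mod_cast h
      nlinarith
  nlinarith [mul_pos pi_pos hc]

lemma sum_int_aux (k : ℕ) {c : ℝ} (hc : 0 < c) :
    Summable fun n : ℤ => (n : ℝ) ^ (2 * k) * Real.exp (-π * c * (n : ℝ) ^ 2) := by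
  apply Summable.of_nat_of_neg_add_one
  · exact_mod_cast sum_nat_aux (2 * k) hc
  · have := (sum_nat_aux (2 * k) hc).comp_injective (add_left_injective 1)
    apply this.congr
    intro n
    simp only [Function.comp_apply]
    push_cast
    rw [Even.neg_pow (even_two_mul k), neg_sq]

noncomputable def f0 (x : ℝ) : ℝ := ∑' n : ℤ, Real.exp (-π * x * (n : ℝ) ^ 2)
noncomputable def f1 (x : ℝ) : ℝ :=
  ∑' n : ℤ, (-π * (n : ℝ) ^ 2) * Real.exp (-π * x * (n : ℝ) ^ 2)
noncomputable def f2 (x : ℝ) : ℝ :=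
  ∑' n : ℤ, (π ^ 2 * (n : ℝ) ^ 4) * Real.exp (-π * x * (n : ℝ) ^ 2)

lemma expDeriv (n : ℤ) (y : ℝ) :
    HasDerivAt (fun y : ℝ => Real.exp (-π * y * (n : ℝ) ^ 2))
      ((-π * (n : ℝ) ^ 2) * Real.exp (-π * y * (n : ℝ) ^ 2)) y := by
  have h : HasDerivAt (fun y : ℝ => -π * y * (n : ℝ) ^ 2) (-π * (n : ℝ) ^ 2) y := by
    simpa using ((hasDerivAt_id y).const_mul (-π)).mul_const ((n : ℝ) ^ 2)
  simpa [mul_comm] using h.exp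

lemma exp_mono {c y : ℝ} (hcy : c ≤ y) (n : ℤ) :
    Real.exp (-π * y * (n : ℝ) ^ 2) ≤ Real.exp (-π * c * (n : ℝ) ^ 2) := by
  apply Real.exp_le_exp.2
  nlinarith [mul_nonneg (mul_nonneg (sub_nonneg.2 hcy) pi_pos.le) (sq_nonneg ((n:ℝ)))]

lemma hasDerivAt_f0 {x : ℝ} (hx : 0 < x) : HasDerivAt f0 (f1 x) x := by
  have hc : 0 < x / 2 := by linarith
  unfold f0 f1
  refine hasDerivAt_tsum_of_isPreconnected
    (u := fun n : ℤ => π * (n : ℝ) ^ 2 * Real.exp (-π * (x / 2) * (n : ℝ) ^ 2))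
    (t := Ioi (x / 2)) (y₀ := x)
    (g := fun (n : ℤ) (y : ℝ) => Real.exp (-π * y * (n : ℝ) ^ 2))
    (g' := fun (n : ℤ) (y : ℝ) => (-π * (n : ℝ) ^ 2) * Real.exp (-π * y * (n : ℝ) ^ 2))
    ?_ ?_ ?_ ?_ ?_ ?_ ?_ ?_
  · have := (sum_int_aux 1 hc).mul_left π
    apply this.congr
    intro n; ring
  · exact isOpen_Ioi
  · exact isPreconnected_Ioi
  · intro n y _; exact expDeriv n y
  · intro n y hy
    have h1 := exp_mono (le_of_lt hy) n
    have : |(-π * (n : ℝ) ^ 2) * Real.exp (-π * y * (n : ℝ) ^ 2)|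
        = π * (n : ℝ) ^ 2 * Real.exp (-π * y * (n : ℝ) ^ 2) := by
      rw [abs_mul, abs_of_nonneg (Real.exp_nonneg _)]
      rw [abs_of_nonpos (by nlinarith [pi_pos, sq_nonneg ((n:ℝ))])]
      ring
    rw [Real.norm_eq_abs, this]
    exact mul_le_mul_of_nonneg_left h1 (by positivity)
  · exact mem_Ioi.2 (by linarith)
  · have := sum_int_aux 0 hx
    apply this.congr
    intro n; simp
  · exact mem_Ioi.2 (by linarith)

lemma hasDerivAt_f1 {x : ℝ} (hx : 0 < x) : HasDerivAt f1 (f2 x) x := by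
  have hc : 0 < x / 2 := by linarith
  unfold f1 f2
  refine hasDerivAt_tsum_of_isPreconnected
    (u := fun n : ℤ => π ^ 2 * (n : ℝ) ^ 4 * Real.exp (-π * (x / 2) * (n : ℝ) ^ 2))
    (t := Ioi (x / 2)) (y₀ := x)
    (g := fun (n : ℤ) (y : ℝ) => (-π * (n : ℝ) ^ 2) * Real.exp (-π * y * (n : ℝ) ^ 2))
    (g' := fun (n : ℤ) (y : ℝ) => (π ^ 2 * (n : ℝ) ^ 4) * Real.exp (-π * y * (n : ℝ) ^ 2))
    ?_ ?_ ?_ ?_ ?_ ?_ ?_ ?_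
  · have := (sum_int_aux 2 hc).mul_left (π ^ 2)
    apply this.congr
    intro n; ring
  · exact isOpen_Ioi
  · exact isPreconnected_Ioi
  · intro n y _
    have := (expDeriv n y).const_mul (-π * (n : ℝ) ^ 2)
    convert this using 1
    · rfl
    ring
  · intro n y hy
    have h1 := exp_mono (le_of_lt hy) n
    have : |(π ^ 2 * (n : ℝ) ^ 4) * Real.exp (-π * y * (n : ℝ) ^ 2)|
        = π ^ 2 * (n : ℝ) ^ 4 * Real.exp (-π * y * (n : ℝ) ^ 2) := by
      rw [abs_of_nonneg (by positivity)]
    rw [Real.norm_eq_abs, this]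
    exact mul_le_mul_of_nonneg_left h1 (by positivity)
  · exact mem_Ioi.2 (by linarith)
  · have := (sum_int_aux 1 hx).mul_left (-π)
    apply this.congr
    intro n; ring
  · exact mem_Ioi.2 (by linarith)

lemma jac {x : ℝ} (hx : 0 < x) : Real.sqrt x * f0 x = f0 x⁻¹ := by
  have h := Real.tsum_exp_neg_mul_int_sq hx
  have h2 : f0 x = 1 / Real.sqrt x * f0 x⁻¹ := by
    rw [Real.sqrt_eq_rpow]
    unfold f0
    rw [h]
    congr 1
  rw [h2]
  have hs : Real.sqrt x ≠ 0 := (Real.sqrt_pos.2 hx).ne'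
  field_simp

lemma eqD {x : ℝ} (hx : 0 < x) :
    1 / (2 * Real.sqrt x) * f0 x + Real.sqrt x * f1 x = f1 x⁻¹ * (-(x ^ 2)⁻¹) := by
  have h1 : HasDerivAt (fun y => Real.sqrt y * f0 y)
      (1 / (2 * Real.sqrt x) * f0 x + Real.sqrt x * f1 x) x :=
    (Real.hasDerivAt_sqrt hx.ne').mul (hasDerivAt_f0 hx)
  have h2 : HasDerivAt (fun y : ℝ => f0 y⁻¹) (f1 x⁻¹ * (-(x ^ 2)⁻¹)) x :=
    (hasDerivAt_f0 (inv_pos.2 hx)).comp x (hasDerivAt_inv hx.ne')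
  have hEq : (fun y => Real.sqrt y * f0 y) =ᶠ[nhds x] (fun y : ℝ => f0 y⁻¹) := by
    filter_upwards [IsOpen.mem_nhds isOpen_Ioi (mem_Ioi.2 hx)] with y hy
    exact jac hy
  exact h1.unique (h2.congr_of_eventuallyEq hEq)

lemma eqE {x : ℝ} (hx : 0 < x) :
    (-(2 * (1 / (2 * Real.sqrt x))) / (2 * Real.sqrt x) ^ 2 * f0 x
      + 1 / (2 * Real.sqrt x) * f1 x)
    + (1 / (2 * Real.sqrt x) * f1 x + Real.sqrt x * f2 x)
    = f2 x⁻¹ * (-(x ^ 2)⁻¹) * (-(x ^ 2)⁻¹) + f1 x⁻¹ * (-(-(((2:ℕ) : ℝ) * x ^ 1) / (x ^ 2) ^ 2)) := by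
  have hs : Real.sqrt x ≠ 0 := (Real.sqrt_pos.2 hx).ne'
  have ha : HasDerivAt (fun y => 1 / (2 * Real.sqrt y))
      (-(2 * (1 / (2 * Real.sqrt x))) / (2 * Real.sqrt x) ^ 2) x := by
    simpa [one_div] using ((Real.hasDerivAt_sqrt hx.ne').const_mul 2).inv
      (by positivity) |>.congr_of_eventuallyEq (Filter.Eventually.of_forall fun y => by simp)
  have h1 : HasDerivAt (fun y => 1 / (2 * Real.sqrt y) * f0 y + Real.sqrt y * f1 y)
      ((-(2 * (1 / (2 * Real.sqrt x))) / (2 * Real.sqrt x) ^ 2 * f0 x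
        + 1 / (2 * Real.sqrt x) * f1 x)
      + (1 / (2 * Real.sqrt x) * f1 x + Real.sqrt x * f2 x)) x :=
    (ha.mul (hasDerivAt_f0 hx)).add ((Real.hasDerivAt_sqrt hx.ne').mul (hasDerivAt_f1 hx))
  have hb : HasDerivAt (fun y : ℝ => f1 y⁻¹) (f2 x⁻¹ * (-(x ^ 2)⁻¹)) x :=
    (hasDerivAt_f1 (inv_pos.2 hx)).comp x (hasDerivAt_inv hx.ne')
  have hc : HasDerivAt (fun y : ℝ => -(y ^ 2)⁻¹) (-(-(((2:ℕ) : ℝ) * x ^ 1) / (x ^ 2) ^ 2)) x :=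
    ((hasDerivAt_pow 2 x).inv (pow_ne_zero 2 hx.ne')).neg
  have h2 : HasDerivAt (fun y : ℝ => f1 y⁻¹ * (-(y ^ 2)⁻¹))
      (f2 x⁻¹ * (-(x ^ 2)⁻¹) * (-(x ^ 2)⁻¹)
        + f1 x⁻¹ * (-(-(((2:ℕ) : ℝ) * x ^ 1) / (x ^ 2) ^ 2))) x :=
    hb.mul hc
  have hEq : (fun y => 1 / (2 * Real.sqrt y) * f0 y + Real.sqrt y * f1 y)
      =ᶠ[nhds x] (fun y : ℝ => f1 y⁻¹ * (-(y ^ 2)⁻¹)) := by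
    filter_upwards [IsOpen.mem_nhds isOpen_Ioi (mem_Ioi.2 hx)] with y hy
    exact eqD hy
  exact h1.unique (h2.congr_of_eventuallyEq hEq)

lemma Kmod {x : ℝ} (hx : 0 < x) :
    2 * x ^ 2 * f2 x + 3 * x * f1 x
      = (Real.sqrt x)⁻¹ * (2 * (x⁻¹) ^ 2 * f2 x⁻¹ + 3 * x⁻¹ * f1 x⁻¹) := by
  have hD := eqD hx
  have hE := eqE hx
  have hs0 : (0:ℝ) < Real.sqrt x := Real.sqrt_pos.2 hx
  have hss : Real.sqrt x * Real.sqrt x = x := Real.mul_self_sqrt hx.le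
  set s := Real.sqrt x with hsdef
  have hxne : x ≠ 0 := hx.ne'
  have hsne : s ≠ 0 := hs0.ne'
  have hB : f1 x⁻¹ = -(x ^ 2) * (1 / (2 * s) * f0 x + s * f1 x) := by
    rw [hD]; field_simp
  have hC : f2 x⁻¹ = (x ^ 2) ^ 2 *
      ((-(2 * (1 / (2 * s))) / (2 * s) ^ 2 * f0 x + 1 / (2 * s) * f1 x)
        + (1 / (2 * s) * f1 x + s * f2 x)) - f1 x⁻¹ * (2 * x) := by
    rw [hE, hB]; push_cast; field_simp; ring
  rw [hC, hB, ← hss]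
  field_simp
  ring

lemma int_tsum_pnat (g : ℤ → ℝ) (hg : Summable g) (h0 : g 0 = 0)
    (hev : ∀ n : ℤ, g (-n) = g n) :
    ∑' n : ℤ, g n = 2 * ∑' n : ℕ+, g ((n : ℕ) : ℤ) := by
  have h1 : Summable fun n : ℕ => g n := hg.comp_injective Nat.cast_injective
  have h2 : Summable fun n : ℕ => g (-((n : ℤ) + 1)) := by
    apply hg.comp_injective
    intro a b hab
    simpa using hab
  rw [tsum_of_nat_of_neg_add_one h1 h2]
  have h3 : ∀ n : ℕ, g (-((n : ℤ) + 1)) = g ((n : ℤ) + 1) := fun n => by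
    simpa using hev ((n : ℤ) + 1)
  simp_rw [h3]
  have h4 : ∑' n : ℕ, g n = g 0 + ∑' n : ℕ, g ((n : ℤ) + 1) := by
    rw [Summable.tsum_eq_zero_add h1]
    push_cast
    rfl
  have h5 : ∑' n : ℕ+, g ((n : ℕ) : ℤ) = ∑' n : ℕ, g ((n : ℤ) + 1) := by
    rw [← Equiv.pnatEquivNat.symm.tsum_eq (fun p : ℕ+ => g ((p : ℕ) : ℤ))]
    apply tsum_congr
    intro n
    congr 1
  rw [h4, h0, h5]
  ring

lemma pnat_int_inj : Function.Injective (fun n : ℕ+ => ((n : ℕ) : ℤ)) := by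
  intro a b h
  have h' : ((a : ℕ) : ℤ) = ((b : ℕ) : ℤ) := h
  exact PNat.coe_injective (Nat.cast_injective h')

lemma Hbar_eq {t : ℝ} (ht : 0 < t) :
    Hbar t = 2 * (t ^ 2) ^ 2 * f2 (t ^ 2) + 3 * t ^ 2 * f1 (t ^ 2) := by
  have hx : (0:ℝ) < t ^ 2 := by positivity
  have hS2 : Summable fun n : ℤ =>
      (π ^ 2 * (n : ℝ) ^ 4) * Real.exp (-π * t ^ 2 * (n : ℝ) ^ 2) := by
    have := (sum_int_aux 2 hx).mul_left (π ^ 2)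
    apply this.congr; intro n; ring
  have hS1 : Summable fun n : ℤ =>
      (-π * (n : ℝ) ^ 2) * Real.exp (-π * t ^ 2 * (n : ℝ) ^ 2) := by
    have := (sum_int_aux 1 hx).mul_left (-π)
    apply this.congr; intro n; ring
  have hf2 : f2 (t ^ 2)
      = 2 * ∑' n : ℕ+, (π ^ 2 * ((n : ℕ) : ℝ) ^ 4)
          * Real.exp (-π * t ^ 2 * ((n : ℕ) : ℝ) ^ 2) := by
    unfold f2
    rw [int_tsum_pnat _ hS2 (by simp) (fun n => by push_cast; ring_nf)]
    push_cast
    rfl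
  have hf1 : f1 (t ^ 2)
      = 2 * ∑' n : ℕ+, (-π * ((n : ℕ) : ℝ) ^ 2)
          * Real.exp (-π * t ^ 2 * ((n : ℕ) : ℝ) ^ 2) := by
    unfold f1
    rw [int_tsum_pnat _ hS1 (by simp) (fun n => by push_cast; ring_nf)]
    push_cast
    rfl
  have hP2 : Summable fun n : ℕ+ =>
      (π ^ 2 * ((n : ℕ) : ℝ) ^ 4) * Real.exp (-π * t ^ 2 * ((n : ℕ) : ℝ) ^ 2) := by
    have := hS2.comp_injective pnat_int_inj
    apply this.congr; intro n; simp
  have hP1 : Summable fun n : ℕ+ =>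
      (-π * ((n : ℕ) : ℝ) ^ 2) * Real.exp (-π * t ^ 2 * ((n : ℕ) : ℝ) ^ 2) := by
    have := hS1.comp_injective pnat_int_inj
    apply this.congr; intro n; simp
  rw [hf1, hf2]
  unfold Hbar
  have key : ∑' n : ℕ+, (2 * π ^ 2 * (n : ℝ) ^ 4 * t ^ 2 - 3 * π * (n : ℝ) ^ 2) *
      Real.exp (-π * (n : ℝ) ^ 2 * t ^ 2)
      = (2 * t ^ 2) * ∑' n : ℕ+, (π ^ 2 * ((n : ℕ) : ℝ) ^ 4)
          * Real.exp (-π * t ^ 2 * ((n : ℕ) : ℝ) ^ 2)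
        + 3 * ∑' n : ℕ+, (-π * ((n : ℕ) : ℝ) ^ 2)
          * Real.exp (-π * t ^ 2 * ((n : ℕ) : ℝ) ^ 2) := by
    rw [← tsum_mul_left, ← tsum_mul_left, ← Summable.tsum_add (hP2.mul_left _) (hP1.mul_left _)]
    apply tsum_congr
    intro n
    have : ((n : ℕ) : ℝ) = (n : ℝ) := rfl
    rw [this]
    ring_nf
  rw [key]
  ring

end Aux

/-- The function `H̄` satisfies the modularity relation
`H̄(t) = t⁻¹ H̄(t⁻¹)` for all `t > 0`. -/
theorem Hbar_modular (t : ℝ) (ht : 0 < t) : Hbar t = t⁻¹ * Hbar t⁻¹ := by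
  have hx : (0:ℝ) < t ^ 2 := by positivity
  have h1 := Hbar_eq ht
  have h2 := Hbar_eq (inv_pos.2 ht)
  have hK := Kmod hx
  have hsq : Real.sqrt (t ^ 2) = t := Real.sqrt_sq ht.le
  have hinv : (t⁻¹) ^ 2 = (t ^ 2)⁻¹ := by rw [inv_pow]
  rw [h1, h2, hinv, hK, hsq]
end
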